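/- Let x_1, x_2, x_3, x_4 ∈ ℝ² and let P be a real 3×4 matrix whose (3,4)-entry equals 1. Set α = P_{3,3} + 1, β = P_{3,2} + 1, γ = P_{3,1} + 1. Then the following are equivalent: (i) P·[X_m;1] ∼ [x_m;1] for m = 1,2,3,4, where X_1 = (0,0,0), X_2 = (0,0,1), X_3 = (0,1,0), X_4 = (1,0,0); (ii) α, β, γ are all nonzero and P = Q·D, where Q is the 3×4 matrix whose columns are [x_4;1], [x_3;1], [x_2;1], [x_1;1], and D is the 4×4 matrix with rows (γ,0,0,0), (0,β,0,0), (0,0,α,0), (−1,−1,−1,1). -/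

import Mathlib

open Matrix

noncomputable section

/-- Homogeneous lift of a point of `ℝ³`. -/
def lift3 (X : Fin 3 → ℝ) : Fin 4 → ℝ := Fin.snoc X 1

/-- Homogeneous lift of a point of `ℝ²`. -/
def lift2 (x : Fin 2 → ℝ) : Fin 3 → ℝ := Fin.snoc x 1

/-- `a ∼ b` : the vectors are parallel, i.e. equal up to a nonzero scalar. -/
def Par {n : ℕ} (a b : Fin n → ℝ) : Prop := ∃ lam : ℝ, lam ≠ 0 ∧ a = lam • b

lemma lift2_eq (v : Fin 2 → ℝ) : lift2 v = ![v 0, v 1, 1] := by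
  funext i; fin_cases i <;> simp [lift2, Fin.snoc] <;> rfl

lemma lift3_eq (a b c : ℝ) : lift3 ![a,b,c] = ![a,b,c,1] := by
  funext i; fin_cases i <;> simp [lift3, Fin.snoc] <;> rfl

set_option maxHeartbeats 1000000 in
/-- a projection matrix with `(3,4)`-entry `1` is consistent with the four
canonical world points `(0,0,0)`, `(0,0,1)`, `(0,1,0)`, `(1,0,0)` iff it factors as `Q·D`
with `α = P₃₃+1`, `β = P₃₂+1`, `γ = P₃₁+1` all nonzero. Here `x 0,…,x 3` are
`x_1,…,x_4`. -/
theorem stmt7 (x : Fin 4 → Fin 2 → ℝ) (P : Matrix (Fin 3) (Fin 4) ℝ) (hP : P 2 3 = 1)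
    (α β γ : ℝ) (hα : α = P 2 2 + 1) (hβ : β = P 2 1 + 1) (hγ : γ = P 2 0 + 1)
    (XX : Fin 4 → Fin 3 → ℝ)
    (hX : XX = ![![0,0,0], ![0,0,1], ![0,1,0], ![1,0,0]])
    (Q : Matrix (Fin 3) (Fin 4) ℝ)
    (hQ : Q = Matrix.of fun i j => ![lift2 (x 3), lift2 (x 2), lift2 (x 1), lift2 (x 0)] j i)
    (D : Matrix (Fin 4) (Fin 4) ℝ)
    (hD : D = !![γ, 0, 0, 0; 0, β, 0, 0; 0, 0, α, 0; -1, -1, -1, 1]) :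
    (∀ m, Par (P.mulVec (lift3 (XX m))) (lift2 (x m))) ↔
      (α ≠ 0 ∧ β ≠ 0 ∧ γ ≠ 0 ∧ P = Q * D) := by
  subst hα hβ hγ hX hQ hD
  constructor
  · intro h
    obtain ⟨l1, hl1, e1⟩ := h 0
    obtain ⟨l2, hl2, e2⟩ := h 1
    obtain ⟨l3, hl3, e3⟩ := h 2
    obtain ⟨l4, hl4, e4⟩ := h 3
    simp only [Matrix.cons_val_zero, Matrix.cons_val_one, Matrix.head_cons,
      Matrix.cons_val_two, Matrix.cons_val_three, Matrix.tail_cons,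
      lift3_eq, lift2_eq] at e1 e2 e3 e4
    have c1 : ∀ i, P.mulVec ![(0:ℝ),0,0,1] i = l1 * ![x 0 0, x 0 1, 1] i :=
      fun i => by rw [e1]; simp
    have c2 : ∀ i, P.mulVec ![(0:ℝ),0,1,1] i = l2 * ![x 1 0, x 1 1, 1] i :=
      fun i => by rw [e2]; simp
    have c3 : ∀ i, P.mulVec ![(0:ℝ),1,0,1] i = l3 * ![x 2 0, x 2 1, 1] i :=
      fun i => by rw [e3]; simp
    have c4 : ∀ i, P.mulVec ![(1:ℝ),0,0,1] i = l4 * ![x 3 0, x 3 1, 1] i :=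
      fun i => by rw [e4]; simp
    simp only [Matrix.mulVec, dotProduct, Fin.sum_univ_four,
      Matrix.cons_val_zero, Matrix.cons_val_one, Matrix.head_cons,
      Matrix.cons_val_two, Matrix.cons_val_three, Matrix.tail_cons,
      mul_zero, mul_one, zero_add, add_zero] at c1 c2 c3 c4
    have h10 := c1 0; have h11 := c1 1; have h12 := c1 2
    have h20 := c2 0; have h21 := c2 1; have h22 := c2 2
    have h30 := c3 0; have h31 := c3 1; have h32 := c3 2
    have h40 := c4 0; have h41 := c4 1; have h42 := c4 2
    simp only [Matrix.cons_val_zero, Matrix.cons_val_one, Matrix.head_cons,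
      Matrix.cons_val_two, Matrix.tail_cons, mul_one] at h10 h11 h12 h20 h21 h22 h30 h31 h32 h40 h41 h42
    -- l1 = 1
    rw [hP] at h12
    have hl1' : l1 = 1 := h12.symm
    subst hl1'
    have hl2' : l2 = P 2 2 + 1 := by rw [← h22, hP]
    have hl3' : l3 = P 2 1 + 1 := by rw [← h32, hP]
    have hl4' : l4 = P 2 0 + 1 := by rw [← h42, hP]
    refine ⟨hl2' ▸ hl2, hl3' ▸ hl3, hl4' ▸ hl4, ?_⟩
    rw [hl2'] at h20 h21
    rw [hl3'] at h30 h31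
    rw [hl4'] at h40 h41
    ext i j
    fin_cases i <;> fin_cases j <;>
      simp [Matrix.mul_apply, Fin.sum_univ_four, lift2_eq] <;>
      (try ring_nf) <;> (try ring_nf at h10 h11 h20 h21 h30 h31 h40 h41 hP ⊢) <;>
      linarith [h10, h11, h20, h21, h30, h31, h40, h41, hP]
  · rintro ⟨ha, hb, hc, hPQD⟩
    intro m
    fin_cases m
    · refine ⟨1, one_ne_zero, ?_⟩
      funext i
      fin_cases i <;>
        rw [hPQD] <;>
        simp [Matrix.mulVec, dotProduct, Matrix.mul_apply, Fin.sum_univ_four,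
          lift3_eq, lift2_eq] <;> ring
    · refine ⟨P 2 2 + 1, ha, ?_⟩
      funext i
      fin_cases i <;>
        rw [hPQD] <;>
        simp [Matrix.mulVec, dotProduct, Matrix.mul_apply, Fin.sum_univ_four,
          lift3_eq, lift2_eq] <;> ring
    · refine ⟨P 2 1 + 1, hb, ?_⟩
      funext i
      fin_cases i <;>
        rw [hPQD] <;>
        simp [Matrix.mulVec, dotProduct, Matrix.mul_apply, Fin.sum_univ_four,
          lift3_eq, lift2_eq] <;> ring
    · refine ⟨P 2 0 + 1, hc, ?_⟩
      funext i
      fin_cases i <;>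
        rw [hPQD] <;>
        simp [Matrix.mulVec, dotProduct, Matrix.mul_apply, Fin.sum_univ_four,
          lift3_eq, lift2_eq] <;> ring
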